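/- For every j ∈ {1,…,r} and every k ∈ ℤ, ∑_{C admissible, |C| = j} ∏_{i∈C} y_i(k) = ∑_{C admissible, |C| = j} ∏_{i∈C} y_i(k+1); that is, the hard-particle partition functions C_j are conserved quantities of the normalized A_r^(1) Q-system (Theorem 5.8). -/

import Mathlib

open Classical

noncomputable section

/-- Admissible subsets (hard-particle configurations on the graph `𝒢_A`):
for all `a < b` in `S`, `b - a ≥ 2`, and `b - a ≥ 3` whenever `a` is even. -/
def AdmissibleA (S : Finset ℕ) : Prop :=
  ∀ a ∈ S, ∀ b ∈ S, a < b → a + 2 ≤ b ∧ (Even a → a + 3 ≤ b)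

namespace QSysAux

open Polynomial Finset

lemma admissibleA_mono {S T : Finset ℕ} (h : S ⊆ T) (hT : AdmissibleA T) : AdmissibleA S :=
  fun a ha b hb hab => hT a (h ha) b (h hb) hab

lemma admissibleA_empty : AdmissibleA ∅ := by
  intro a ha; simp at ha

noncomputable def hpZ (w : ℕ → ℂ) (N m : ℕ) : Polynomial ℂ :=
  ∑ S ∈ (Finset.Icc m N).powerset.filter AdmissibleA,
    Polynomial.C (∏ i ∈ S, w i) * Polynomial.X ^ S.card

lemma hpZ_of_lt (w : ℕ → ℂ) {N m : ℕ} (h : N < m) : hpZ w N m = 1 := by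
  unfold hpZ
  rw [Finset.Icc_eq_empty (by omega)]
  rw [Finset.powerset_empty, Finset.filter_singleton, if_pos admissibleA_empty]
  simp

lemma hpZ_rec (w : ℕ → ℂ) {N m : ℕ} (h : m ≤ N) :
    hpZ w N m = hpZ w N (m+1)
      + Polynomial.C (w m) * Polynomial.X * hpZ w N (m + if Even m then 3 else 2) := by
  set δ := if Even m then 3 else 2 with hδ
  have hδ2 : 2 ≤ δ := by rw [hδ]; split <;> omega
  have hδ3 : δ ≤ 3 := by rw [hδ]; split <;> omega
  have hδm : Even m → δ = 3 := fun hm => by rw [hδ, if_pos hm]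
  unfold hpZ
  rw [← Finset.sum_filter_add_sum_filter_not
      ((Finset.Icc m N).powerset.filter AdmissibleA) (fun S => m ∈ S)]
  rw [add_comm]
  congr 1
  · -- m ∉ S part
    apply Finset.sum_congr
    · ext S
      simp only [Finset.mem_filter, Finset.mem_powerset]
      constructor
      · rintro ⟨⟨hsub, hadm⟩, hm⟩
        refine ⟨fun b hb => ?_, hadm⟩
        have hb' := hsub hb
        have hbm : b ≠ m := fun e => hm (e ▸ hb)
        simp only [Finset.mem_Icc] at hb' ⊢
        omega
      · rintro ⟨hsub, hadm⟩
        have hm : m ∉ S := fun hm => by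
          have := hsub hm; simp only [Finset.mem_Icc] at this; omega
        refine ⟨⟨fun b hb => ?_, hadm⟩, hm⟩
        have := hsub hb; simp only [Finset.mem_Icc] at this ⊢; omega
    · intro S _; rfl
  · -- m ∈ S part
    rw [Finset.mul_sum]
    refine Finset.sum_bij' (fun S _ => S.erase m) (fun T _ => insert m T) ?_ ?_ ?_ ?_ ?_
    · intro S hS
      simp only [Finset.mem_filter, Finset.mem_powerset] at hS ⊢
      obtain ⟨⟨hsub, hadm⟩, hm⟩ := hS
      refine ⟨fun b hb => ?_, admissibleA_mono (Finset.erase_subset _ _) hadm⟩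
      rw [Finset.mem_erase] at hb
      obtain ⟨hbm, hbS⟩ := hb
      have hb' := hsub hbS
      simp only [Finset.mem_Icc] at hb' ⊢
      have hmb : m < b := by omega
      have h2 := hadm m hm b hbS hmb
      rcases Nat.even_or_odd m with he | ho
      · have := h2.2 he; have := hδm he; omega
      · have : δ = 2 := by rw [hδ, if_neg (Nat.not_even_iff_odd.mpr ho)]
        omega
    · intro T hT
      simp only [Finset.mem_filter, Finset.mem_powerset] at hT ⊢
      obtain ⟨hsub, hadm⟩ := hT
      have hmT : m ∉ T := fun hm => by
        have := hsub hm; simp only [Finset.mem_Icc] at this; omega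
      have hins : insert m T ⊆ Finset.Icc m N := by
        intro b hb
        rcases Finset.mem_insert.mp hb with rfl | hbT
        · simp only [Finset.mem_Icc]; omega
        · have := hsub hbT; simp only [Finset.mem_Icc] at this ⊢; omega
      refine ⟨⟨hins, ?_⟩, Finset.mem_insert_self m T⟩
      intro a ha b hb hab
      rcases Finset.mem_insert.mp ha with rfl | haT
      · rcases Finset.mem_insert.mp hb with rfl | hbT
        · omega
        · have := hsub hbT; simp only [Finset.mem_Icc] at this
          exact ⟨by omega, fun he => by have := hδm he; omega⟩
      · rcases Finset.mem_insert.mp hb with rfl | hbT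
        · have := hsub haT; simp only [Finset.mem_Icc] at this; omega
        · exact hadm a haT b hbT hab
    · intro S hS
      simp only [Finset.mem_filter] at hS
      exact Finset.insert_erase hS.2
    · intro T hT
      simp only [Finset.mem_filter, Finset.mem_powerset] at hT
      have hmT : m ∉ T := fun hm => by
        have := hT.1 hm; simp only [Finset.mem_Icc] at this; omega
      exact Finset.erase_insert hmT
    · intro S hS
      simp only [Finset.mem_filter] at hS
      have hm : m ∈ S := hS.2
      rw [← Finset.mul_prod_erase S w hm, ← Finset.card_erase_add_one hm]
      rw [map_mul, pow_succ]
      ring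

lemma hpZ_coeff (w : ℕ → ℂ) (N j : ℕ) :
    (hpZ w N 1).coeff j
      = ∑ S ∈ ((Finset.Icc 1 N).powersetCard j).filter AdmissibleA, ∏ i ∈ S, w i := by
  unfold hpZ
  rw [Polynomial.finset_sum_coeff]
  rw [Finset.powersetCard_eq_filter, Finset.filter_comm]
  conv_rhs => rw [Finset.sum_filter]
  apply Finset.sum_congr rfl
  intro S hS
  rw [Polynomial.coeff_C_mul, Polynomial.coeff_X_pow]
  by_cases hc : S.card = j
  · simp [hc]
  · rw [if_neg (fun h : j = S.card => hc h.symm)]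
    rw [if_neg hc, mul_zero]

end QSysAux

open Polynomial in
/-- Theorem 5.8: the hard-particle partition functions `C_j` on `𝒢_A` are conserved
quantities of the normalized `A_r^(1)` Q-system. -/
theorem stmt_1 (r : ℕ) (hr : 1 ≤ r) (R : ℕ → ℤ → ℂ)
    (hR0 : ∀ k, R 0 k = 1) (hRtop : ∀ k, R (r + 1) k = 1)
    (hRne : ∀ i k, i ≤ r + 1 → R i k ≠ 0)
    (hrec : ∀ i k, 1 ≤ i → i ≤ r →
      R i (k + 1) * R i (k - 1) = (R i k) ^ 2 + R (i - 1) k * R (i + 1) k)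
    (y : ℕ → ℤ → ℂ)
    (hyodd : ∀ i k, 1 ≤ i → i ≤ r + 1 →
      y (2 * i - 1) k = R i (k + 1) * R (i - 1) k / (R i k * R (i - 1) (k + 1)))
    (hyeven : ∀ i k, 1 ≤ i → i ≤ r →
      y (2 * i) k = R (i - 1) k * R (i + 1) (k + 1) / (R i k * R i (k + 1)))
    (j : ℕ) (hj1 : 1 ≤ j) (hj2 : j ≤ r) (k : ℤ) :
    ∑ S ∈ ((Finset.Icc 1 (2 * r + 1)).powersetCard j).filter AdmissibleA,
        ∏ i ∈ S, y i k
      = ∑ S ∈ ((Finset.Icc 1 (2 * r + 1)).powersetCard j).filter AdmissibleA,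
          ∏ i ∈ S, y i (k + 1) := by
  classical
  set β : ℕ → ℂ := fun i =>
    if i = 1 ∨ r + 2 ≤ i then 0
    else R i (k+2) * R (i-2) (k+1) / (R (i-1) (k+1) * R (i-1) (k+2)) with hβdef
  have hβ1 : β 1 = 0 := by simp [hβdef]
  have hβr2 : β (r+2) = 0 := by simp [hβdef]
  have hβval : ∀ i : ℕ, 2 ≤ i → i ≤ r + 1 →
      β i = R i (k+2) * R (i-2) (k+1) / (R (i-1) (k+1) * R (i-1) (k+2)) := by
    intro i h1 h2; rw [hβdef]; simp only; rw [if_neg (by omega)]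
  have hQ : ∀ i : ℕ, 1 ≤ i → i ≤ r →
      R i k * R i (k+2) = R i (k+1)^2 + R (i-1) (k+1) * R (i+1) (k+1) := by
    intro i h1 h2
    have h := hrec i (k+1) h1 h2
    rw [show k+1+1 = k+2 by ring, show k+1-1 = k by ring] at h
    linear_combination h
  -- scalar identity s1 : β (i+1) = y (2 i) (k+1)
  have s1 : ∀ i : ℕ, 1 ≤ i → i ≤ r → β (i+1) = y (2*i) (k+1) := by
    intro i h1 h2
    rw [hβval (i+1) (by omega) (by omega), hyeven i (k+1) h1 h2]
    rw [show i+1-2 = i-1 by omega, show i+1-1 = i by omega, show k+1+1 = k+2 by ring]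
    ring
  -- scalar identity s2
  have s2 : ∀ i : ℕ, 1 ≤ i → i ≤ r →
      y (2*i-1) k + y (2*i) k = y (2*i-1) (k+1) + β i := by
    intro i h1 h2
    have e1 := hyodd i k h1 (by omega)
    have e2 := hyodd i (k+1) h1 (by omega)
    rw [show k+1+1 = k+2 by ring] at e2
    have e3 := hyeven i k h1 h2
    rcases eq_or_lt_of_le h1 with h1' | h1'
    · -- i = 1
      obtain rfl : i = 1 := h1'.symm
      rw [e1, e2, e3, hβ1]
      simp only [show (1:ℕ)-1 = 0 from rfl, hR0]
      have q := hQ 1 le_rfl h2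
      rw [hR0 (k+1)] at q
      have n1 := hRne 1 k (by omega)
      have n2 := hRne 1 (k+1) (by omega)
      field_simp
      linear_combination (-1 : ℂ) * q
    · -- i ≥ 2
      obtain ⟨m, rfl⟩ : ∃ m, i = m + 2 := ⟨i - 2, by omega⟩
      rw [e1, e2, e3, hβval (m+2) (by omega) (by omega)]
      rw [show m+2-1 = m+1 by omega, show m+2-2 = m by omega]
      have q1 := hQ (m+1) (by omega) (by omega)
      have q2 := hQ (m+2) (by omega) h2
      rw [show m+1-1 = m by omega, show m+1+1 = m+2 by omega] at q1
      rw [show m+2-1 = m+1 by omega, show m+2+1 = m+3 by omega] at q2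
      have n1 := hRne (m+2) k (by omega)
      have n2 := hRne (m+2) (k+1) (by omega)
      have n3 := hRne (m+1) k (by omega)
      have n4 := hRne (m+1) (k+1) (by omega)
      have n5 := hRne (m+1) (k+2) (by omega)
      field_simp
      rw [show m+2+1 = m+3 by omega]
      linear_combination (R (m+2) k * R (m+2) (k+2)) * q1
        - (R (m+1) k * R (m+1) (k+2)) * q2
  -- scalar identity s3
  have s3 : ∀ i : ℕ, 1 ≤ i → i ≤ r →
      y (2*i-1) k * β (i+1) = y (2*i) k * y (2*i+1) (k+1) := by
    intro i h1 h2
    have e := hyodd (i+1) (k+1) (by omega) (by omega)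
    rw [show 2*(i+1)-1 = 2*i+1 by omega, show i+1-1 = i by omega,
        show k+1+1 = k+2 by ring] at e
    rw [e, hyodd i k h1 (by omega), hyeven i k h1 h2,
        hβval (i+1) (by omega) (by omega),
        show i+1-2 = i-1 by omega, show i+1-1 = i by omega]
    have n1 := hRne i k (by omega)
    have n2 := hRne i (k+1) (by omega)
    have n3 := hRne i (k+2) (by omega)
    have n4 := hRne (i-1) k (by omega)
    have n5 := hRne (i-1) (k+1) (by omega)
    have n6 := hRne (i+1) (k+1) (by omega)
    have n7 := hRne (i+1) (k+2) (by omega)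
    field_simp
  -- boundary identity
  have sI0 : y (2*(r+1)-1) k = y (2*(r+1)-1) (k+1) + β (r+1) := by
    have e1 := hyodd (r+1) k (by omega) le_rfl
    have e2 := hyodd (r+1) (k+1) (by omega) le_rfl
    rw [show k+1+1 = k+2 by ring] at e2
    rw [e1, e2, hβval (r+1) (by omega) le_rfl,
        show r+1-1 = r by omega, show r+1-2 = r-1 by omega,
        hRtop k, hRtop (k+1), hRtop (k+2)]
    have q := hQ r hr le_rfl
    rw [hRtop (k+1), mul_one] at q
    have n1 := hRne r k (by omega)
    have n2 := hRne r (k+1) (by omega)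
    have n3 := hRne r (k+2) (by omega)
    field_simp
    linear_combination q
  -- polynomial level
  set Z : ℤ → ℕ → Polynomial ℂ :=
    fun t m => QSysAux.hpZ (fun n => y n t) (2*r+1) m with hZdef
  have htop : ∀ (t : ℤ) (m : ℕ), 2*r+1 < m → Z t m = 1 := by
    intro t m h
    rw [hZdef]; exact QSysAux.hpZ_of_lt _ h
  have hodd : ∀ (t : ℤ) (m : ℕ), m % 2 = 1 → m ≤ 2*r+1 →
      Z t m = Z t (m+1) + C (y m t) * X * Z t (m+2) := by
    intro t m hm hle
    have h := QSysAux.hpZ_rec (fun n => y n t) (N := 2*r+1) hle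
    rw [if_neg (by rw [Nat.even_iff]; omega)] at h
    rw [hZdef]; exact h
  have heven : ∀ (t : ℤ) (m : ℕ), m % 2 = 0 → m ≤ 2*r+1 →
      Z t m = Z t (m+1) + C (y m t) * X * Z t (m+3) := by
    intro t m hm hle
    have h := QSysAux.hpZ_rec (fun n => y n t) (N := 2*r+1) hle
    rw [if_pos (Nat.even_iff.mpr hm)] at h
    rw [hZdef]; exact h
  have key : ∀ d i : ℕ, 1 ≤ i → i + d = r + 1 →
      (Z k (2*i-1) = Z (k+1) (2*i-1) + C (β i) * X * Z (k+1) (2*i+1)) ∧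
      (Z k (2*i+1) = Z (k+1) (2*i+1) + C (β (i+1)) * X * Z (k+1) (2*i+3)) := by
    intro d
    induction d with
    | zero =>
      intro i h1 h2
      obtain rfl : i = r + 1 := by omega
      constructor
      · have ha := hodd k (2*(r+1)-1) (by omega) (by omega)
        have hb := hodd (k+1) (2*(r+1)-1) (by omega) (by omega)
        rw [show 2*(r+1)-1+1 = 2*(r+1) by omega,
            show 2*(r+1)-1+2 = 2*(r+1)+1 by omega] at ha hb
        rw [ha, hb, htop k (2*(r+1)) (by omega), htop (k+1) (2*(r+1)) (by omega),
            htop k (2*(r+1)+1) (by omega), htop (k+1) (2*(r+1)+1) (by omega)]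
        have hC : (C (y (2*(r+1)-1) k) : Polynomial ℂ)
            = C (y (2*(r+1)-1) (k+1)) + C (β (r+1)) := by
          rw [← map_add]; exact congrArg C sI0
        linear_combination X * hC
      · rw [htop k (2*(r+1)+1) (by omega), htop (k+1) (2*(r+1)+1) (by omega),
            htop (k+1) (2*(r+1)+3) (by omega), show r+1+1 = r+2 by omega, hβr2]
        simp
    | succ d ih =>
      intro i h1 h2
      have hir : i ≤ r := by omega
      have IH := ih (i+1) (by omega) (by omega)
      rw [show 2*(i+1)-1 = 2*i+1 by omega, show 2*(i+1)+1 = 2*i+3 by omega,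
          show 2*(i+1)+3 = 2*i+5 by omega, show i+1+1 = i+2 by omega] at IH
      obtain ⟨h3, h4⟩ := IH
      refine ⟨?_, h3⟩
      have h1' := hodd k (2*i-1) (by omega) (by omega)
      rw [show 2*i-1+1 = 2*i by omega, show 2*i-1+2 = 2*i+1 by omega] at h1'
      have h2' := heven k (2*i) (by omega) (by omega)
      have h5 := hodd (k+1) (2*i-1) (by omega) (by omega)
      rw [show 2*i-1+1 = 2*i by omega, show 2*i-1+2 = 2*i+1 by omega] at h5
      have h6 := heven (k+1) (2*i) (by omega) (by omega)
      have h7 : Z (k+1) (2*i+1) = Z (k+1) (2*i+3) + C (β (i+2)) * X * Z (k+1) (2*i+5)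
          + C (y (2*i+1) (k+1)) * X * Z (k+1) (2*i+3) := by
        have ho := hodd (k+1) (2*i+1) (by omega) (by omega)
        rw [show 2*i+1+1 = 2*i+2 by omega, show 2*i+1+2 = 2*i+3 by omega] at ho
        by_cases hc : i + 1 ≤ r
        · have he := heven (k+1) (2*i+2) (by omega) (by omega)
          rw [show 2*i+2+1 = 2*i+3 by omega, show 2*i+2+3 = 2*i+5 by omega] at he
          have hb : β (i+2) = y (2*i+2) (k+1) := by
            have := s1 (i+1) (by omega) hc
            rw [show 2*(i+1) = 2*i+2 by omega, show i+1+1 = i+2 by omega] at this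
            exact this
          rw [ho, he, hb]; try ring
        · have hieq : i = r := by omega
          rw [ho, htop (k+1) (2*i+2) (by omega), htop (k+1) (2*i+3) (by omega),
              htop (k+1) (2*i+5) (by omega), show i+2 = r+2 by omega, hβr2]
          simp
          try ring
      have hs1 : (C (β (i+1)) : Polynomial ℂ) = C (y (2*i) (k+1)) :=
        congrArg C (s1 i h1 hir)
      have hs2 : (C (y (2*i-1) k) + C (y (2*i) k) : Polynomial ℂ)
          = C (y (2*i-1) (k+1)) + C (β i) := by
        rw [← map_add, ← map_add]; exact congrArg C (s2 i h1 hir)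
      have hs3 : (C (y (2*i-1) k) * C (β (i+1)) : Polynomial ℂ)
          = C (y (2*i) k) * C (y (2*i+1) (k+1)) := by
        rw [← map_mul, ← map_mul]; exact congrArg C (s3 i h1 hir)
      linear_combination h1' + h2' + (1 + C (y (2*i-1) k) * X) * h3
        + (C (y (2*i) k) * X) * h4 - h5 - h6
        + (X * Z (k+1) (2*i+3)) * hs1 + (X * Z (k+1) (2*i+1)) * hs2
        + (X^2 * Z (k+1) (2*i+3)) * hs3 - (C (y (2*i) k) * X) * h7
  have final := (key r 1 le_rfl (by omega)).1
  rw [hβ1, show 2*1-1 = 1 by omega] at final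
  simp only [map_zero, zero_mul, add_zero] at final
  calc (∑ S ∈ ((Finset.Icc 1 (2 * r + 1)).powersetCard j).filter AdmissibleA,
          ∏ i ∈ S, y i k)
      = (Z k 1).coeff j := by
        rw [hZdef]; exact (QSysAux.hpZ_coeff _ _ j).symm
    _ = (Z (k+1) 1).coeff j := by rw [final]
    _ = _ := by rw [hZdef]; exact QSysAux.hpZ_coeff _ _ j
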